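/- Let L be a graph Laplacian and s ∈ R^n with ||s|| ≤ R. For 0 < α < β, the polarization P(γ) = s̄^T (I + γ^{-1}L)^{-2} s̄ (with s̄ = s - ((s^T 1)/n)·1) satisfies P(β) - P(α) ≤ (1/(1+β^{-1}C)^2 - 1/(1+α^{-1}C)^2)·R^2, where C = (α^{1/3} - β^{1/3})/(β^{-2/3} - α^{-2/3}). -/

import Mathlib

open Matrix

lemma key_ineq {a b l : ℝ} (ha : 0 < a) (hab : a < b) (hl : 0 ≤ l) :
    (1 + (b^3)⁻¹ * l)⁻¹ * (1 + (b^3)⁻¹ * l)⁻¹ - (1 + (a^3)⁻¹ * l)⁻¹ * (1 + (a^3)⁻¹ * l)⁻¹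
      ≤ (a + b)^3 * (b - a) / (a^2 + a*b + b^2)^2 := by
  have hb : 0 < b := ha.trans hab
  have hA : (0:ℝ) < a^3 + l := by positivity
  have hB : (0:ℝ) < b^3 + l := by positivity
  have e1 : (1 + (b^3)⁻¹ * l)⁻¹ = b^3 / (b^3 + l) := by
    rw [show 1 + (b^3)⁻¹ * l = (b^3 + l)/b^3 by field_simp, inv_div]
  have e2 : (1 + (a^3)⁻¹ * l)⁻¹ = a^3 / (a^3 + l) := by
    rw [show 1 + (a^3)⁻¹ * l = (a^3 + l)/a^3 by field_simp, inv_div]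
  rw [e1, e2, div_mul_div_comm, div_mul_div_comm,
    div_sub_div _ _ (by positivity) (by positivity),
    div_le_div_iff₀ (by positivity) (by positivity)]
  have hid : (a + b)^3 * (b - a) * ((b^3+l)*(b^3+l) * ((a^3+l)*(a^3+l)))
      - (b^3*b^3 * ((a^3+l)*(a^3+l)) - a^3*a^3 * ((b^3+l)*(b^3+l))) * (a^2 + a*b + b^2)^2
      = (b - a) * ((a+b)*l - a^2*b^2)^2 *
        ((a+b)*l^2 + 2*(a^4 + a^3*b + a^2*b^2 + a*b^3 + b^4)*l + a^2*b^2*(a+b)^3) := by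
    ring
  nlinarith [mul_nonneg (mul_nonneg (by linarith : (0:ℝ) ≤ b - a) (sq_nonneg ((a+b)*l - a^2*b^2)))
    (by positivity : (0:ℝ) ≤ (a+b)*l^2 + 2*(a^4 + a^3*b + a^2*b^2 + a*b^3 + b^4)*l + a^2*b^2*(a+b)^3)]

theorem stmt8 {n : ℕ} (L : Matrix (Fin n) (Fin n) ℝ)
    (hL : L.PosSemidef) (hL1 : L *ᵥ 1 = 0)
    (s : Fin n → ℝ) (R α β : ℝ) (hα : 0 < α) (hαβ : α < β)
    (hs : Real.sqrt (s ⬝ᵥ s) ≤ R) :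
    let sb := s - ((s ⬝ᵥ (1 : Fin n → ℝ)) / (n : ℝ)) • (1 : Fin n → ℝ)
    let P : ℝ → ℝ := fun γ => sb ⬝ᵥ (((1 + γ⁻¹ • L)⁻¹ * (1 + γ⁻¹ • L)⁻¹) *ᵥ sb)
    let C := (α ^ ((1 : ℝ) / 3) - β ^ ((1 : ℝ) / 3)) / (β ^ (-(2 : ℝ) / 3) - α ^ (-(2 : ℝ) / 3))
    P β - P α ≤ (1 / (1 + C / β) ^ 2 - 1 / (1 + C / α) ^ 2) * R ^ 2 := by
  intro sb P C
  have hβ : 0 < β := hα.trans hαβ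
  -- scalar abbreviations
  set a : ℝ := α ^ ((1 : ℝ) / 3) with ha_def
  set b : ℝ := β ^ ((1 : ℝ) / 3) with hb_def
  have ha : 0 < a := Real.rpow_pos_of_pos hα _
  have hb : 0 < b := Real.rpow_pos_of_pos hβ _
  have hab : a < b := Real.rpow_lt_rpow hα.le hαβ (by norm_num)
  have ha3 : a ^ 3 = α := by
    rw [ha_def, ← Real.rpow_natCast (α ^ ((1:ℝ)/3)) 3, ← Real.rpow_mul hα.le]
    norm_num
  have hb3 : b ^ 3 = β := by
    rw [hb_def, ← Real.rpow_natCast (β ^ ((1:ℝ)/3)) 3, ← Real.rpow_mul hβ.le]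
    norm_num
  have hQ : (0:ℝ) < a^2 + a*b + b^2 := by positivity
  have hC : C = (a - b) / (β ^ (-(2:ℝ)/3) - α ^ (-(2:ℝ)/3)) := rfl
  have hCval : C = a^2 * b^2 / (a + b) := by
    have hα23 : α ^ (-(2:ℝ)/3) = (a^2)⁻¹ := by
      rw [show (-(2:ℝ)/3) = (1:ℝ)/3 * (-2) by norm_num, Real.rpow_mul hα.le, ← ha_def,
        show (-2 : ℝ) = ((-2 : ℤ) : ℝ) by norm_num, Real.rpow_intCast, _root_.zpow_neg,
        show ((2:ℤ)) = ((2:ℕ):ℤ) from rfl, zpow_natCast]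
    have hβ23 : β ^ (-(2:ℝ)/3) = (b^2)⁻¹ := by
      rw [show (-(2:ℝ)/3) = (1:ℝ)/3 * (-2) by norm_num, Real.rpow_mul hβ.le, ← hb_def,
        show (-2 : ℝ) = ((-2 : ℤ) : ℝ) by norm_num, Real.rpow_intCast, _root_.zpow_neg,
        show ((2:ℤ)) = ((2:ℕ):ℤ) from rfl, zpow_natCast]
    have hlt : (b^2)⁻¹ < (a^2)⁻¹ := by
      apply inv_strictAnti₀ (by positivity)
      nlinarith
    rw [hC, hα23, hβ23, div_eq_div_iff (by linarith) (by positivity)]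
    field_simp
    ring
  set gC : ℝ := 1 / (1 + C / β) ^ 2 - 1 / (1 + C / α) ^ 2 with hgC_def
  have hgC : gC = (a + b)^3 * (b - a) / (a^2 + a*b + b^2)^2 := by
    rw [hgC_def, hCval, ← ha3, ← hb3]
    have hx : 1 + a^2 * b^2 / (a + b) / b^3 = (a^2 + a*b + b^2) / (b * (a + b)) := by
      field_simp
      ring
    have hy : 1 + a^2 * b^2 / (a + b) / a^3 = (a^2 + a*b + b^2) / (a * (a + b)) := by
      field_simp
    rw [hx, hy, div_pow, div_pow, one_div_div, one_div_div, div_sub_div_same]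
    congr 1
    ring
  have hgC0 : 0 ≤ gC := by
    rw [hgC]
    have h' : (0:ℝ) ≤ b - a := by linarith
    positivity
  -- norm bounds
  have hR : 0 ≤ R := le_trans (Real.sqrt_nonneg _) hs
  have hss0 : 0 ≤ s ⬝ᵥ s := Finset.sum_nonneg fun i _ => mul_self_nonneg _
  have hssR : s ⬝ᵥ s ≤ R ^ 2 := by
    nlinarith [Real.sq_sqrt hss0, Real.sqrt_nonneg (s ⬝ᵥ s)]
  have hone : (1 : Fin n → ℝ) ⬝ᵥ (1 : Fin n → ℝ) = (n : ℝ) := by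
    simp [dotProduct]
  have hsbR : sb ⬝ᵥ sb ≤ R ^ 2 := by
    have hexp : sb ⬝ᵥ sb = s ⬝ᵥ s - 2 * ((s ⬝ᵥ 1) / n) * (s ⬝ᵥ 1)
        + ((s ⬝ᵥ 1) / n)^2 * n := by
      show (s - _) ⬝ᵥ (s - _) = _
      rw [dotProduct_sub, sub_dotProduct, sub_dotProduct, smul_dotProduct, smul_dotProduct,
        dotProduct_smul, dotProduct_smul, hone, dotProduct_comm (1 : Fin n → ℝ) s]
      simp only [smul_eq_mul]
      ring
    rcases eq_or_ne (n : ℝ) 0 with hn | hn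
    · rw [hexp, hn]
      simp only [div_zero, mul_zero, zero_mul, sub_zero, add_zero]
      linarith
    · have hn0 : (0:ℝ) < n := lt_of_le_of_ne (Nat.cast_nonneg n) (Ne.symm hn)
      have hexp2 : sb ⬝ᵥ sb = s ⬝ᵥ s - (s ⬝ᵥ 1)^2 / n := by
        rw [hexp]; field_simp; ring
      rw [hexp2]
      have : 0 ≤ (s ⬝ᵥ 1)^2 / (n:ℝ) := by positivity
      linarith
  -- spectral setup
  have hH : L.IsHermitian := hL.1
  set U : Matrix (Fin n) (Fin n) ℝ := (hH.eigenvectorUnitary : Matrix (Fin n) (Fin n) ℝ) with hUdef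
  set E : Fin n → ℝ := hH.eigenvalues with hEdef
  have hU1 : U * star U = 1 := mem_unitaryGroup_iff.mp hH.eigenvectorUnitary.2
  have hU2 : star U * U = 1 := mem_unitaryGroup_iff'.mp hH.eigenvectorUnitary.2
  have hspec : L = U * diagonal E * star U := by
    have := hH.spectral_theorem
    rwa [RCLike.ofReal_real_eq_id, Function.id_comp] at this
  set Mf : (Fin n → ℝ) → Matrix (Fin n) (Fin n) ℝ := fun d => U * diagonal d * star U
    with hMf
  have hMmul : ∀ d e : Fin n → ℝ, Mf d * Mf e = Mf (fun i => d i * e i) := by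
    intro d e
    show U * diagonal d * star U * (U * diagonal e * star U)
      = U * diagonal (fun i => d i * e i) * star U
    simp only [Matrix.mul_assoc]
    rw [← Matrix.mul_assoc (star U) U, hU2, Matrix.one_mul,
      ← Matrix.mul_assoc (diagonal d) (diagonal e), diagonal_mul_diagonal]
  have hMconst : ∀ c : ℝ, Mf (fun _ => c) = c • (1 : Matrix (Fin n) (Fin n) ℝ) := by
    intro c
    show U * diagonal (fun _ => c) * star U = _
    rw [← smul_one_eq_diagonal, Matrix.mul_smul, Matrix.mul_one, Matrix.smul_mul, hU1]
  have hMadd : ∀ d e : Fin n → ℝ, Mf d + Mf e = Mf (fun i => d i + e i) := by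
    intro d e
    show U * diagonal d * star U + U * diagonal e * star U = U * diagonal (fun i => d i + e i) * star U
    rw [← Matrix.add_mul, ← Matrix.mul_add, diagonal_add]
  have hplus : ∀ γ : ℝ, (1 : Matrix (Fin n) (Fin n) ℝ) + γ⁻¹ • L
      = Mf (fun i => 1 + γ⁻¹ * E i) := by
    intro γ
    have h1 : (1 : Matrix (Fin n) (Fin n) ℝ) = Mf (fun _ => 1) := by
      rw [hMconst 1, one_smul]
    have h2 : γ⁻¹ • L = Mf (fun i => γ⁻¹ * E i) := by
      rw [hspec]
      show _ = U * diagonal (fun i => γ⁻¹ * E i) * star U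
      rw [show (fun i => γ⁻¹ * E i) = γ⁻¹ • E from rfl, diagonal_smul, Matrix.mul_smul,
        Matrix.smul_mul]
    rw [h1, h2, hMadd]
  have hEnn : ∀ i, 0 ≤ E i := fun i => hL.eigenvalues_nonneg i
  have hpos : ∀ γ : ℝ, 0 < γ → ∀ i, (0:ℝ) < 1 + γ⁻¹ * E i := by
    intro γ hγ i
    have h1 : 0 ≤ γ⁻¹ * E i := mul_nonneg (inv_nonneg.mpr hγ.le) (hEnn i)
    linarith
  have hinv : ∀ γ : ℝ, 0 < γ → (1 + γ⁻¹ • L)⁻¹ = Mf (fun i => (1 + γ⁻¹ * E i)⁻¹) := by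
    intro γ hγ
    apply inv_eq_right_inv
    rw [hplus γ, hMmul]
    have h1 : (fun i => (1 + γ⁻¹ * E i) * (1 + γ⁻¹ * E i)⁻¹) = fun _ : Fin n => (1:ℝ) :=
      funext fun i => mul_inv_cancel₀ (hpos γ hγ i).ne'
    rw [h1, hMconst, one_smul]
  have hP : ∀ γ : ℝ, 0 < γ →
      P γ = sb ⬝ᵥ (Mf (fun i => (1 + γ⁻¹ * E i)⁻¹ * (1 + γ⁻¹ * E i)⁻¹) *ᵥ sb) := by
    intro γ hγ
    show sb ⬝ᵥ (((1 + γ⁻¹ • L)⁻¹ * (1 + γ⁻¹ • L)⁻¹) *ᵥ sb) = _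
    rw [hinv γ hγ, hMmul]
  -- the PSD matrix
  set dd : Fin n → ℝ := fun i => gC - ((1 + β⁻¹ * E i)⁻¹ * (1 + β⁻¹ * E i)⁻¹
      - (1 + α⁻¹ * E i)⁻¹ * (1 + α⁻¹ * E i)⁻¹) with hdd_def
  have hdd : ∀ i, 0 ≤ dd i := by
    intro i
    have hk := key_ineq ha hab (hEnn i)
    rw [ha3, hb3] at hk
    have : (1 + β⁻¹ * E i)⁻¹ * (1 + β⁻¹ * E i)⁻¹
        - (1 + α⁻¹ * E i)⁻¹ * (1 + α⁻¹ * E i)⁻¹ ≤ gC := by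
      rw [hgC]; exact hk
    simp only [hdd_def]
    linarith
  have hPSD : (Mf dd).PosSemidef := by
    have hdiag : (diagonal dd).PosSemidef := posSemidef_diagonal_iff.mpr hdd
    have h2 := hdiag.mul_mul_conjTranspose_same U
    rwa [← Matrix.star_eq_conjTranspose] at h2
  have hkey0 : 0 ≤ sb ⬝ᵥ (Mf dd *ᵥ sb) := by
    have h2 := hPSD.dotProduct_mulVec_nonneg sb
    simpa using h2
  have hsplit : Mf dd = gC • 1 - Mf (fun i => (1 + β⁻¹ * E i)⁻¹ * (1 + β⁻¹ * E i)⁻¹)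
      + Mf (fun i => (1 + α⁻¹ * E i)⁻¹ * (1 + α⁻¹ * E i)⁻¹) := by
    rw [← hMconst gC]
    show U * diagonal dd * star U
      = U * diagonal (fun _ => gC) * star U
        - U * diagonal (fun i => (1 + β⁻¹ * E i)⁻¹ * (1 + β⁻¹ * E i)⁻¹) * star U
        + U * diagonal (fun i => (1 + α⁻¹ * E i)⁻¹ * (1 + α⁻¹ * E i)⁻¹) * star U
    rw [← Matrix.sub_mul, ← Matrix.add_mul, ← Matrix.mul_sub, ← Matrix.mul_add,
      diagonal_sub, diagonal_add]
    have hfun : dd = fun i => gC - (1 + β⁻¹ * E i)⁻¹ * (1 + β⁻¹ * E i)⁻¹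
        + (1 + α⁻¹ * E i)⁻¹ * (1 + α⁻¹ * E i)⁻¹ := by
      funext i
      simp only [hdd_def]
      ring
    rw [hfun]
  have hfinal : sb ⬝ᵥ (Mf dd *ᵥ sb) = gC * (sb ⬝ᵥ sb) - P β + P α := by
    rw [hsplit, add_mulVec, sub_mulVec, smul_mulVec, one_mulVec, dotProduct_add,
      dotProduct_sub, dotProduct_smul, smul_eq_mul, hP β hβ, hP α hα]
  have hmain : P β - P α ≤ gC * (sb ⬝ᵥ sb) := by linarith
  calc P β - P α ≤ gC * (sb ⬝ᵥ sb) := hmain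
    _ ≤ gC * R ^ 2 := mul_le_mul_of_nonneg_left hsbR hgC0
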